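/- (Lower-index tail sum bound) Let ℓ ≥ 1 and i ≥ 1 be integers. The sum over integers 1 ≤ j < i with i − j > ℓ(10ℓ² + i^{2/3} + j^{2/3}) of (i^{2/3} + j^{2/3})/((i−j)²·j^{1/3}) is at most C·i^{1/3}/(ℓ(ℓ² + i^{2/3})) for a universal constant C. -/

import Mathlib

open scoped BigOperators

lemma amgm23 (a b : ℝ) (ha : 0 ≤ a) (hb : 0 ≤ b) : a ^ ((2:ℝ)/3) * b ^ ((1:ℝ)/3) ≤ 2/3 * a + 1/3 * b :=
  Real.geom_mean_le_arith_mean2_weighted (by norm_num) (by norm_num) ha hb (by norm_num)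

lemma sum13 (n : ℕ) (hn : 1 ≤ n) :
    ∑ j ∈ Finset.Ico 1 n, ((j:ℝ) ^ ((1:ℝ)/3))⁻¹ ≤ 3/2 * ((n:ℝ) - 1) ^ ((2:ℝ)/3) := by
  induction n, hn using Nat.le_induction with
  | base => simp
  | succ n hn ih =>
    rw [Finset.sum_Ico_succ_top hn]
    have hb0 : (0:ℝ) < (n:ℝ) := by exact_mod_cast hn
    have hb1 : (1:ℝ) ≤ (n:ℝ) := by exact_mod_cast hn
    have ha0 : (0:ℝ) ≤ (n:ℝ) - 1 := by linarith
    have h3 : (0:ℝ) < (n:ℝ) ^ ((1:ℝ)/3) := Real.rpow_pos_of_pos hb0 _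
    have h1 : ((n:ℝ) - 1) ^ ((2:ℝ)/3) * (n:ℝ) ^ ((1:ℝ)/3) ≤ 2/3 * ((n:ℝ)-1) + 1/3 * (n:ℝ) :=
      amgm23 _ _ ha0 hb0.le
    have h2 : (n:ℝ) ^ ((2:ℝ)/3) * (n:ℝ) ^ ((1:ℝ)/3) = (n:ℝ) := by
      rw [← Real.rpow_add hb0]
      norm_num
    have key : ((n:ℝ) ^ ((1:ℝ)/3))⁻¹ ≤ 3/2 * ((n:ℝ) ^ ((2:ℝ)/3) - ((n:ℝ)-1) ^ ((2:ℝ)/3)) := by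
      rw [inv_le_iff_one_le_mul₀ h3]
      nlinarith
    push_cast
    have hcast : ((n:ℝ) + 1 - 1) = (n:ℝ) := by ring
    rw [hcast]
    linarith

lemma sumsq (m n : ℕ) (hm : 2 ≤ m) :
    ∑ k ∈ Finset.Ico m n, (((k:ℝ))^2)⁻¹ ≤ ((m:ℝ) - 1)⁻¹ := by
  have hm1 : (0:ℝ) < (m:ℝ) - 1 := by
    have : (2:ℝ) ≤ (m:ℝ) := by exact_mod_cast hm
    linarith
  rcases le_or_gt m n with h | h
  · have main : ∀ n, m ≤ n → ∑ k ∈ Finset.Ico m n, (((k:ℝ))^2)⁻¹ ≤ ((m:ℝ)-1)⁻¹ - ((n:ℝ)-1)⁻¹ := by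
      intro n hn
      induction n, hn using Nat.le_induction with
      | base => simp
      | succ n hn ih =>
        rw [Finset.sum_Ico_succ_top hn]
        have hn2 : (2:ℝ) ≤ (n:ℝ) := by
          have := hm.trans hn; exact_mod_cast this
        have h1 : (0:ℝ) < (n:ℝ) - 1 := by linarith
        have h2 : (0:ℝ) < (n:ℝ) := by linarith
        have step : (((n:ℝ))^2)⁻¹ ≤ ((n:ℝ)-1)⁻¹ - ((n:ℝ))⁻¹ := by
          have e : ((n:ℝ)-1)⁻¹ - (n:ℝ)⁻¹ = (((n:ℝ)-1)*(n:ℝ))⁻¹ := by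
            field_simp
            ring
          rw [e]
          apply inv_anti₀ (by positivity)
          nlinarith
        push_cast
        have : ((n:ℝ) + 1 - 1) = (n:ℝ) := by ring
        rw [this]
        linarith
    have := main n h
    have hn1 : (0:ℝ) ≤ ((n:ℝ)-1)⁻¹ := by
      have : (2:ℝ) ≤ (n:ℝ) := by have := hm.trans h; exact_mod_cast this
      exact inv_nonneg.mpr (by linarith)
    linarith
  · rw [Finset.Ico_eq_empty (by omega)]
    simp only [Finset.sum_empty]
    exact inv_nonneg.mpr hm1.le

set_option maxHeartbeats 1000000 in
/-- lower-index tail sum bound for the short-range cutoff (`j < i`). -/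
theorem stmt4 : ∃ C : ℝ, 0 < C ∧ ∀ ℓ i : ℕ, 1 ≤ ℓ → 1 ≤ i →
    (∑ j ∈ Finset.Ico 1 i, if
        (ℓ : ℝ) * (10 * (ℓ : ℝ) ^ 2 + (i : ℝ) ^ ((2:ℝ)/3) + (j : ℝ) ^ ((2:ℝ)/3)) < (i : ℝ) - (j : ℝ)
      then ((i : ℝ) ^ ((2:ℝ)/3) + (j : ℝ) ^ ((2:ℝ)/3)) /
        (((i : ℝ) - (j : ℝ)) ^ 2 * (j : ℝ) ^ ((1:ℝ)/3)) else 0)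
    ≤ C * (i : ℝ) ^ ((1:ℝ)/3) / ((ℓ : ℝ) * ((ℓ : ℝ) ^ 2 + (i : ℝ) ^ ((2:ℝ)/3))) := by
  refine ⟨100, by norm_num, ?_⟩
  intro ℓ i hℓ hi
  have hx1 : (1:ℝ) ≤ (i:ℝ) := by exact_mod_cast hi
  have hL1 : (1:ℝ) ≤ (ℓ:ℝ) := by exact_mod_cast hℓ
  have hx0 : (0:ℝ) < (i:ℝ) := by linarith
  have hx23 : (1:ℝ) ≤ (i:ℝ) ^ ((2:ℝ)/3) := Real.one_le_rpow hx1 (by norm_num)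
  have hx13 : (0:ℝ) < (i:ℝ) ^ ((1:ℝ)/3) := Real.rpow_pos_of_pos hx0 _
  set x : ℝ := (i:ℝ) with hxdef
  set L : ℝ := (ℓ:ℝ) with hLdef
  set D : ℝ := L * (L^2 + x ^ ((2:ℝ)/3)) with hDdef
  have hD2 : (2:ℝ) ≤ D := by nlinarith
  have hD0 : (0:ℝ) < D := by linarith
  -- rpow identities
  have hxx : x ^ ((1:ℝ)/3) * x ^ ((2:ℝ)/3) = x := by
    rw [← Real.rpow_add hx0]; norm_num
  have hsplit : x ^ ((1:ℝ)/3) * x ^ ((1:ℝ)/3) = x ^ ((2:ℝ)/3) := by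
    rw [← Real.rpow_add hx0]; norm_num
  set m : ℕ := ⌊D⌋₊ + 1 with hmdef
  have hfl : ((⌊D⌋₊ : ℝ)) = (m:ℝ) - 1 := by push_cast [hmdef]; ring
  have hm2 : 2 ≤ m := by
    have h2 : (2:ℕ) ≤ ⌊D⌋₊ := Nat.le_floor (by exact_mod_cast hD2)
    omega
  have hmD : D/2 ≤ (m:ℝ) - 1 := by
    have h1 : D < (⌊D⌋₊:ℝ) + 1 := Nat.lt_floor_add_one D
    rw [← hfl]; linarith
  have hm1pos : (0:ℝ) < (m:ℝ) - 1 := by linarith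
  -- the two majorant families
  set A : ℕ → ℝ := fun j => 4 / (x ^ ((1:ℝ)/3) * D) * (((j:ℝ)) ^ ((1:ℝ)/3))⁻¹ with hAdef
  set B : ℕ → ℝ := fun j => if (m:ℝ) ≤ x - (j:ℝ) then 4 * x ^ ((1:ℝ)/3) * ((x - (j:ℝ))^2)⁻¹ else 0
    with hBdef
  have hAnn : ∀ j : ℕ, 0 ≤ A j := by
    intro j
    have : (0:ℝ) ≤ ((j:ℝ)) ^ ((1:ℝ)/3) := Real.rpow_nonneg (Nat.cast_nonneg j) _
    rw [hAdef]
    positivity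
  have hBnn : ∀ j : ℕ, 0 ≤ B j := by
    intro j
    rw [hBdef]
    dsimp only
    split_ifs with h
    · have hmpos : (0:ℝ) < (m:ℝ) := by positivity
      have : (0:ℝ) < x - (j:ℝ) := lt_of_lt_of_le hmpos h
      positivity
    · exact le_refl _
  -- pointwise bound
  have hpt : ∀ j ∈ Finset.Ico 1 i,
      (if L * (10 * L ^ 2 + x ^ ((2:ℝ)/3) + (j : ℝ) ^ ((2:ℝ)/3)) < x - (j : ℝ)
        then (x ^ ((2:ℝ)/3) + (j : ℝ) ^ ((2:ℝ)/3)) /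
          ((x - (j : ℝ)) ^ 2 * (j : ℝ) ^ ((1:ℝ)/3)) else 0) ≤ A j + B j := by
    intro j hj
    obtain ⟨hj1, hj2⟩ := Finset.mem_Ico.mp hj
    have hy1 : (1:ℝ) ≤ (j:ℝ) := by exact_mod_cast hj1
    have hy0 : (0:ℝ) < (j:ℝ) := by linarith
    have hyx : (j:ℝ) ≤ x - 1 := by
      have hn : j + 1 ≤ i := hj2
      have : (j:ℝ) + 1 ≤ x := by rw [hxdef]; exact_mod_cast hn
      linarith
    have hy13 : (0:ℝ) < ((j:ℝ)) ^ ((1:ℝ)/3) := Real.rpow_pos_of_pos hy0 _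
    have hy23 : (0:ℝ) < ((j:ℝ)) ^ ((2:ℝ)/3) := Real.rpow_pos_of_pos hy0 _
    split_ifs with hcut
    · have hyx23 : ((j:ℝ)) ^ ((2:ℝ)/3) ≤ x ^ ((2:ℝ)/3) :=
        Real.rpow_le_rpow hy0.le (by linarith) (by norm_num)
      have hDcut : D < x - (j:ℝ) := by nlinarith
      have hxy0 : (0:ℝ) < x - (j:ℝ) := lt_trans hD0 hDcut
      have hnum : x ^ ((2:ℝ)/3) + ((j:ℝ)) ^ ((2:ℝ)/3) ≤ 2 * x ^ ((2:ℝ)/3) := by linarith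
      -- B indicator holds
      have hind : (m:ℝ) ≤ x - (j:ℝ) := by
        have hsub : x - (j:ℝ) = ((i - j : ℕ) : ℝ) := by
          push_cast [Nat.cast_sub (le_of_lt hj2)]; ring
        rw [hsub] at hDcut ⊢
        have : ⌊D⌋₊ < i - j := (Nat.floor_lt hD0.le).mpr hDcut
        exact_mod_cast Nat.succ_le_of_lt this
      rcases le_or_gt x (2*(x - (j:ℝ))) with hcase | hcase
      · -- small j
        have hden : (x/2) * D * ((j:ℝ)) ^ ((1:ℝ)/3) ≤ (x - (j:ℝ))^2 * ((j:ℝ)) ^ ((1:ℝ)/3) := by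
          have hkey : (x/2) * D ≤ (x - (j:ℝ))^2 := by
            nlinarith [mul_nonneg hxy0.le (show (0:ℝ) ≤ (x - (j:ℝ)) - x/2 by linarith),
              mul_le_mul_of_nonneg_left hDcut.le (show (0:ℝ) ≤ x/2 by linarith)]
          exact mul_le_mul_of_nonneg_right hkey hy13.le
        have hden0 : (0:ℝ) < (x/2) * D * ((j:ℝ)) ^ ((1:ℝ)/3) := by positivity
        have h1 : (x ^ ((2:ℝ)/3) + ((j:ℝ)) ^ ((2:ℝ)/3)) / ((x - (j:ℝ))^2 * ((j:ℝ)) ^ ((1:ℝ)/3))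
            ≤ (2 * x ^ ((2:ℝ)/3)) / ((x/2) * D * ((j:ℝ)) ^ ((1:ℝ)/3)) :=
          div_le_div₀ (by positivity) hnum hden0 hden
        have h2 : (2 * x ^ ((2:ℝ)/3)) / ((x/2) * D * ((j:ℝ)) ^ ((1:ℝ)/3)) = A j := by
          rw [hAdef]
          dsimp only
          have ex : (x/2) * D * ((j:ℝ)) ^ ((1:ℝ)/3) = (x ^ ((1:ℝ)/3) * D) * ((j:ℝ)) ^ ((1:ℝ)/3) * (x ^ ((2:ℝ)/3) / 2) := by
            linear_combination (D * ((j:ℝ)) ^ ((1:ℝ)/3) / 2) * hxx.symm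
          rw [ex]
          field_simp
          ring
        calc _ ≤ (2 * x ^ ((2:ℝ)/3)) / ((x/2) * D * ((j:ℝ)) ^ ((1:ℝ)/3)) := h1
          _ = A j := h2
          _ ≤ A j + B j := le_add_of_nonneg_right (hBnn j)
      · -- large j: (j:ℝ) ≥ x/2
        have hjx2 : x/2 ≤ (j:ℝ) := by linarith
        have h8 : ((8:ℝ)) ^ ((1:ℝ)/3) = 2 := by
          rw [show (8:ℝ) = 2^(3:ℕ) by norm_num, ← Real.rpow_natCast 2 3,
            ← Real.rpow_mul (by norm_num)]
          norm_num
        have hy13big : x ^ ((1:ℝ)/3) / 2 ≤ ((j:ℝ)) ^ ((1:ℝ)/3) := by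
          have e : x ^ ((1:ℝ)/3) / 2 = (x/8) ^ ((1:ℝ)/3) := by
            rw [Real.div_rpow hx0.le (by norm_num : (0:ℝ) ≤ 8), h8]
          rw [e]
          exact Real.rpow_le_rpow (by positivity) (by linarith) (by norm_num)
        have hden : (x - (j:ℝ))^2 * (x ^ ((1:ℝ)/3) / 2) ≤ (x - (j:ℝ))^2 * ((j:ℝ)) ^ ((1:ℝ)/3) :=
          mul_le_mul_of_nonneg_left hy13big (by positivity)
        have hden0 : (0:ℝ) < (x - (j:ℝ))^2 * (x ^ ((1:ℝ)/3) / 2) := by positivity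
        have h1 : (x ^ ((2:ℝ)/3) + ((j:ℝ)) ^ ((2:ℝ)/3)) / ((x - (j:ℝ))^2 * ((j:ℝ)) ^ ((1:ℝ)/3))
            ≤ (2 * x ^ ((2:ℝ)/3)) / ((x - (j:ℝ))^2 * (x ^ ((1:ℝ)/3) / 2)) :=
          div_le_div₀ (by positivity) hnum hden0 hden
        have h2 : (2 * x ^ ((2:ℝ)/3)) / ((x - (j:ℝ))^2 * (x ^ ((1:ℝ)/3) / 2))
            = 4 * x ^ ((1:ℝ)/3) * ((x - (j:ℝ))^2)⁻¹ := by
          rw [← hsplit]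
          field_simp
          ring
        have h3 : B j = 4 * x ^ ((1:ℝ)/3) * ((x - (j:ℝ))^2)⁻¹ := by
          rw [hBdef]; dsimp only; rw [if_pos hind]
        calc _ ≤ (2 * x ^ ((2:ℝ)/3)) / ((x - (j:ℝ))^2 * (x ^ ((1:ℝ)/3) / 2)) := h1
          _ = B j := by rw [h2, h3]
          _ ≤ A j + B j := le_add_of_nonneg_left (hAnn j)
    · exact add_nonneg (hAnn j) (hBnn j)
  have hsum := Finset.sum_le_sum hpt
  rw [Finset.sum_add_distrib] at hsum
  -- bound sum of A
  have hA1 : ∑ j ∈ Finset.Ico 1 i, A j ≤ 6 * x ^ ((1:ℝ)/3) / D := by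
    have e : ∑ j ∈ Finset.Ico 1 i, A j
        = 4 / (x ^ ((1:ℝ)/3) * D) * ∑ j ∈ Finset.Ico 1 i, (((j:ℝ)) ^ ((1:ℝ)/3))⁻¹ := by
      rw [hAdef, Finset.mul_sum]
    rw [e]
    have hs := sum13 i hi
    have hxm1 : ((x:ℝ) - 1) ^ ((2:ℝ)/3) ≤ x ^ ((2:ℝ)/3) :=
      Real.rpow_le_rpow (by linarith) (by linarith) (by norm_num)
    have hc : (0:ℝ) ≤ 4 / (x ^ ((1:ℝ)/3) * D) := by positivity
    calc 4 / (x ^ ((1:ℝ)/3) * D) * ∑ j ∈ Finset.Ico 1 i, (((j:ℝ)) ^ ((1:ℝ)/3))⁻¹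
        ≤ 4 / (x ^ ((1:ℝ)/3) * D) * (3/2 * x ^ ((2:ℝ)/3)) := by
          apply mul_le_mul_of_nonneg_left _ hc
          calc _ ≤ 3/2 * ((x:ℝ) - 1) ^ ((2:ℝ)/3) := hs
            _ ≤ 3/2 * x ^ ((2:ℝ)/3) := by linarith
      _ = 6 * x ^ ((1:ℝ)/3) / D := by
          rw [← hsplit, div_mul_eq_mul_div, div_eq_div_iff (by positivity) hD0.ne']
          ring
  -- bound sum of B
  have hB1 : ∑ j ∈ Finset.Ico 1 i, B j ≤ 8 * x ^ ((1:ℝ)/3) / D := by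
    have hB2 : ∑ j ∈ Finset.Ico 1 i, B j
        = ∑ k ∈ Finset.Ico 1 i,
          (if (m:ℝ) ≤ (k:ℝ) then 4 * x ^ ((1:ℝ)/3) * (((k:ℝ))^2)⁻¹ else 0) := by
      apply Finset.sum_nbij' (fun j => i - j) (fun k => i - k)
      · intro a ha
        simp only [Finset.mem_Ico] at ha ⊢
        omega
      · intro a ha
        simp only [Finset.mem_Ico] at ha ⊢
        omega
      · intro a ha
        simp only [Finset.mem_Ico] at ha
        omega
      · intro a ha
        simp only [Finset.mem_Ico] at ha
        omega
      · intro a ha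
        simp only [Finset.mem_Ico] at ha
        have hsub : ((i - a : ℕ) : ℝ) = x - (a:ℝ) := by
          push_cast [Nat.cast_sub (le_of_lt ha.2)]; ring
        rw [hBdef]
        dsimp only
        rw [hsub]
    rw [hB2]
    have hB3 : ∑ k ∈ Finset.Ico 1 i,
        (if (m:ℝ) ≤ (k:ℝ) then 4 * x ^ ((1:ℝ)/3) * (((k:ℝ))^2)⁻¹ else 0)
        ≤ ∑ k ∈ Finset.Ico m i, 4 * x ^ ((1:ℝ)/3) * (((k:ℝ))^2)⁻¹ := by
      rw [← Finset.sum_filter]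
      apply Finset.sum_le_sum_of_subset_of_nonneg
      · intro k hk
        simp only [Finset.mem_filter, Finset.mem_Ico] at hk ⊢
        refine ⟨?_, hk.1.2⟩
        exact_mod_cast hk.2
      · intro k _ _
        positivity
    have hB4 : ∑ k ∈ Finset.Ico m i, 4 * x ^ ((1:ℝ)/3) * (((k:ℝ))^2)⁻¹
        ≤ 4 * x ^ ((1:ℝ)/3) * ((m:ℝ) - 1)⁻¹ := by
      rw [← Finset.mul_sum]
      exact mul_le_mul_of_nonneg_left (sumsq m i hm2) (by positivity)
    have hB5 : 4 * x ^ ((1:ℝ)/3) * ((m:ℝ) - 1)⁻¹ ≤ 8 * x ^ ((1:ℝ)/3) / D := by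
      have h1 : ((m:ℝ) - 1)⁻¹ ≤ 2 / D := by
        have h2 : ((m:ℝ) - 1)⁻¹ ≤ (D/2)⁻¹ := inv_anti₀ (by linarith) hmD
        calc ((m:ℝ) - 1)⁻¹ ≤ (D/2)⁻¹ := h2
          _ = 2 / D := by field_simp
      calc 4 * x ^ ((1:ℝ)/3) * ((m:ℝ) - 1)⁻¹ ≤ 4 * x ^ ((1:ℝ)/3) * (2 / D) :=
            mul_le_mul_of_nonneg_left h1 (by positivity)
        _ = 8 * x ^ ((1:ℝ)/3) / D := by ring
    linarith
  calc _ ≤ ∑ j ∈ Finset.Ico 1 i, A j + ∑ j ∈ Finset.Ico 1 i, B j := hsum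
    _ ≤ 6 * x ^ ((1:ℝ)/3) / D + 8 * x ^ ((1:ℝ)/3) / D := add_le_add hA1 hB1
    _ ≤ 100 * x ^ ((1:ℝ)/3) / D := by
        rw [← add_div, div_le_div_iff₀ hD0 hD0]
        nlinarith
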